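/- Let M be a field of characteristic ≠ 2, 3 and m ∈ M with m^2 + 3m + 9 ≠ 0. Setting n = -m - 3, the splitting fields over M of X^3 - m*X^2 - (m+3)*X - 1 and X^3 - n*X^2 - (n+3)*X - 1 coincide; equivalently, X^3 - m*X^2 - (m+3)*X - 1 and X^3 + (m+3)*X^2 + m*X - 1 have the same splitting field over M. -/

import Mathlib

open Polynomial

theorem stmt11_aux {K : Type*} [Field K] (a x : K) (hx : x ≠ 0) :
    x⁻¹ ^ 3 + (a + 3) * x⁻¹ ^ 2 + a * x⁻¹ - 1 = -x⁻¹ ^ 3 * (x ^ 3 - a * x ^ 2 - (a + 3) * x - 1) := by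
  field_simp; ring

theorem stmt11 {M : Type*} [Field M] (h2 : ringChar M ≠ 2) (h3 : ringChar M ≠ 3)
    (m : M) (hΔ : m ^ 2 + 3 * m + 9 ≠ 0) :
    IntermediateField.adjoin M
        ((X ^ 3 - C m * X ^ 2 - C (m + 3) * X - 1 : M[X]).rootSet (AlgebraicClosure M)) =
      IntermediateField.adjoin M
        ((X ^ 3 + C (m + 3) * X ^ 2 + C m * X - 1 : M[X]).rootSet (AlgebraicClosure M)) := by
  set K := AlgebraicClosure M
  set f : M[X] := X ^ 3 - C m * X ^ 2 - C (m + 3) * X - 1 with hf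
  set g : M[X] := X ^ 3 + C (m + 3) * X ^ 2 + C m * X - 1 with hg
  have hf0 : f ≠ 0 := fun h => by
    have := congrArg (fun p => p.coeff 0) h
    simp [hf, coeff_one] at this
  have hg0 : g ≠ 0 := fun h => by
    have := congrArg (fun p => p.coeff 0) h
    simp [hg, coeff_one] at this
  have hfe : ∀ x : K, aeval x f = x ^ 3 - algebraMap M K m * x ^ 2
      - (algebraMap M K m + 3) * x - 1 := fun x => by
    simp [hf, map_add, map_ofNat]
  have hge : ∀ x : K, aeval x g = x ^ 3 + (algebraMap M K m + 3) * x ^ 2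
      + algebraMap M K m * x - 1 := fun x => by
    simp [hg, map_add, map_ofNat]
  have hfz : ∀ x : K, aeval x f = 0 → x ≠ 0 := by
    intro x hx h0
    rw [hfe, h0] at hx
    norm_num at hx
  have hgz : ∀ x : K, aeval x g = 0 → x ≠ 0 := by
    intro x hx h0
    rw [hge, h0] at hx
    norm_num at hx
  have key : ∀ x : K, x ≠ 0 → (aeval x f = 0 ↔ aeval x⁻¹ g = 0) := by
    intro x hx
    rw [hfe, hge]
    constructor <;> intro h
    · rw [stmt11_aux _ _ hx, h, mul_zero]
    · rw [stmt11_aux _ _ hx] at h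
      have h' : -x⁻¹ ^ 3 * (x ^ 3 - algebraMap M K m * x ^ 2
          - (algebraMap M K m + 3) * x - 1) = 0 := by linear_combination h
      rcases mul_eq_zero.mp h' with h'' | h''
      · exact absurd (by simpa using h'') (pow_ne_zero 3 hx)
      · exact h''
  apply le_antisymm <;> rw [IntermediateField.adjoin_le_iff] <;> intro x hx <;>
    rw [mem_rootSet] at hx
  · have hx0 := hfz x hx.2
    have : x⁻¹ ∈ g.rootSet K := by
      rw [mem_rootSet]
      exact ⟨hg0, (key x hx0).mp hx.2⟩
    have hmem := IntermediateField.subset_adjoin M (g.rootSet K) this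
    have := inv_mem hmem
    rwa [inv_inv] at this
  · have hx0 := hgz x hx.2
    have : x⁻¹ ∈ f.rootSet K := by
      rw [mem_rootSet]
      refine ⟨hf0, ?_⟩
      rw [key x⁻¹ (inv_ne_zero hx0), inv_inv]
      exact hx.2
    have hmem := IntermediateField.subset_adjoin M (f.rootSet K) this
    have := inv_mem hmem
    rwa [inv_inv] at this
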